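/- For each k, and each pair (a,b) with 0 ≤ a,b ≤ k, the polynomial p = Σ_{j=0}^{m} (−1)^j/j! · (−c)_j (a+b−c−k)_j / (|b−a|+1)_j · z^{k−(a+b−c)−j} w^{a−c+j} z̄^{c−j} w̄^{b−c+j}, where m = min{a,b,k−a,k−b}, c = min{a,b}, and (x)_j denotes the rising factorial, is harmonic: Δp = 0 for Δ = 4(∂_{z̄}∂_z + ∂_{w̄}∂_w). -/

import Mathlib

open MvPolynomial Finset

/-- The rising factorial (Pochhammer symbol) `(x)_n = x(x+1)⋯(x+n−1)`. -/
def risingFac (x : ℤ) : ℕ → ℤ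
  | 0 => 1
  | n + 1 => risingFac x n * (x + n)

/-- The Laplacian `Δ = 4(∂_{z̄}∂_z + ∂_{w̄}∂_w)` on polynomials in the four
independent variables `z = X 0`, `w = X 1`, `z̄ = X 2`, `w̄ = X 3`. -/
noncomputable def Lap (f : MvPolynomial (Fin 4) ℂ) : MvPolynomial (Fin 4) ℂ :=
  4 * (pderiv 2 (pderiv 0 f) + pderiv 3 (pderiv 1 f))

lemma risingFac_pos (x : ℤ) (hx : 0 < x) : ∀ n, 0 < risingFac x n
  | 0 => one_pos
  | n+1 => by
    rw [risingFac]
    exact mul_pos (risingFac_pos x hx n) (by omega)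

lemma Lap_smul (r : ℂ) (f : MvPolynomial (Fin 4) ℂ) : Lap (r • f) = r • Lap f := by
  simp [Lap, smul_add, mul_smul_comm, mul_add]

lemma Lap_sum {α : Type*} (s : Finset α) (f : α → MvPolynomial (Fin 4) ℂ) :
    Lap (∑ i ∈ s, f i) = ∑ i ∈ s, Lap (f i) := by
  simp [Lap, map_sum, Finset.mul_sum, Finset.sum_add_distrib, mul_add]

lemma Lap_monomial (d : Fin 4 →₀ ℕ) (co : ℂ) :
    Lap (monomial d co) =
      monomial (d - Finsupp.single 0 1 - Finsupp.single 2 1) (4 * co * (d 0) * (d 2)) +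
      monomial (d - Finsupp.single 1 1 - Finsupp.single 3 1) (4 * co * (d 1) * (d 3)) := by
  have h2 : ((d - Finsupp.single (0:Fin 4) 1) : Fin 4 →₀ ℕ) 2 = d 2 := by
    simp [Finsupp.sub_apply, Finsupp.single_apply]
  have h3 : ((d - Finsupp.single (1:Fin 4) 1) : Fin 4 →₀ ℕ) 3 = d 3 := by
    simp [Finsupp.sub_apply, Finsupp.single_apply]
  have h4 : (4 : MvPolynomial (Fin 4) ℂ) = C 4 := (map_ofNat C 4).symm
  rw [Lap, pderiv_monomial, pderiv_monomial, pderiv_monomial, pderiv_monomial, h2, h3,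
    h4, mul_add, C_mul_monomial, C_mul_monomial]
  ring_nf

/-- The coefficient `λ_j`. -/
noncomputable def lam (c A s t j : ℕ) : ℂ :=
  ((-1 : ℂ) ^ j * ((risingFac (-(c:ℤ)) j : ℤ) : ℂ) * ((risingFac (-(A:ℤ)) j : ℤ) : ℂ)) /
    ((j.factorial : ℂ) * ((risingFac ((s:ℤ)+t+1) j : ℤ) : ℂ))

/-- The exponent multidegree of the `j`-th monomial. -/
noncomputable def Ee (c A s t j : ℕ) : Fin 4 →₀ ℕ :=
  Finsupp.single 0 (A - j) + Finsupp.single 1 (s + j) +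
    Finsupp.single 2 (c - j) + Finsupp.single 3 (t + j)

/-- The exponent multidegree appearing in the Laplacian. -/
noncomputable def Ff (c A s t j : ℕ) : Fin 4 →₀ ℕ :=
  Finsupp.single 0 (A - 1 - j) + Finsupp.single 1 (s + j) +
    Finsupp.single 2 (c - 1 - j) + Finsupp.single 3 (t + j)

lemma key (c A s t j : ℕ) (hst : s * t = 0) :
    lam c A s t j * (((A:ℂ) - j) * ((c:ℂ) - j))
      + lam c A s t (j+1) * (((s:ℂ)+j+1) * ((t:ℂ)+j+1)) = 0 := by
  have hrec : ∀ x : ℤ, risingFac x (j+1) = risingFac x j * (x + j) := fun x => rfl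
  have hd0 : (j.factorial : ℂ) ≠ 0 := Nat.cast_ne_zero.mpr j.factorial_ne_zero
  have hd1 : ((risingFac ((s:ℤ)+t+1) j : ℤ) : ℂ) ≠ 0 := by
    exact_mod_cast (risingFac_pos _ (by omega) j).ne'
  have hd2 : ((j:ℂ) + 1) ≠ 0 := by
    have : ((j+1:ℕ):ℂ) ≠ 0 := Nat.cast_ne_zero.mpr (by omega)
    push_cast at this; exact this
  have hd3 : ((s:ℂ) + t + 1 + j) ≠ 0 := by
    have : ((s+t+1+j:ℕ):ℂ) ≠ 0 := Nat.cast_ne_zero.mpr (by omega)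
    push_cast at this; exact this
  have hst' : (s : ℂ) * t = 0 := by exact_mod_cast congrArg (Nat.cast : ℕ → ℂ) hst
  rw [lam, lam, hrec, hrec, hrec, Nat.factorial_succ]
  push_cast
  set Xc : ℂ := ((risingFac (-(c:ℤ)) j : ℤ) : ℂ) with hXc
  set XA : ℂ := ((risingFac (-(A:ℤ)) j : ℤ) : ℂ) with hXA
  set D : ℂ := ((risingFac ((s:ℤ)+t+1) j : ℤ) : ℂ) with hD
  field_simp
  linear_combination ((Xc*XA*(A:ℂ)*(j:ℂ) - Xc*XA*(A:ℂ)*(c:ℂ) + Xc*XA*(j:ℂ)*(c:ℂ)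
    - Xc*XA*(j:ℂ)^2) * (-1:ℂ)^j) * hst'

lemma aux (c A s t : ℕ) (hst : s * t = 0) :
    Lap (∑ j ∈ Finset.range (min c A + 1),
        lam c A s t j • (monomial (Ee c A s t j) (1:ℂ))) = 0 := by
  have hE0 : ∀ j, (Ee c A s t j) 0 = A - j := fun j => by
    simp [Ee, Finsupp.single_apply]
  have hE1 : ∀ j, (Ee c A s t j) 1 = s + j := fun j => by
    simp [Ee, Finsupp.single_apply]
  have hE2 : ∀ j, (Ee c A s t j) 2 = c - j := fun j => by
    simp [Ee, Finsupp.single_apply]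
  have hE3 : ∀ j, (Ee c A s t j) 3 = t + j := fun j => by
    simp [Ee, Finsupp.single_apply]
  have hsub1 : ∀ j, Ee c A s t j - Finsupp.single 0 1 - Finsupp.single 2 1 = Ff c A s t j := by
    intro j; ext i; fin_cases i <;>
      simp [Ee, Ff, Finsupp.sub_apply, Finsupp.single_apply] <;> omega
  have hsub2 : ∀ j, Ee c A s t (j+1) - Finsupp.single 1 1 - Finsupp.single 3 1 = Ff c A s t j := by
    intro j; ext i; fin_cases i <;>
      simp [Ee, Ff, Finsupp.sub_apply, Finsupp.single_apply] <;> omega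
  rw [Lap_sum]
  have step : ∀ j ∈ Finset.range (min c A + 1),
      Lap (lam c A s t j • (monomial (Ee c A s t j) (1:ℂ))) =
        lam c A s t j • monomial (Ee c A s t j - Finsupp.single 0 1 - Finsupp.single 2 1)
            (4 * ((A - j : ℕ) : ℂ) * ((c - j : ℕ) : ℂ)) +
        lam c A s t j • monomial (Ee c A s t j - Finsupp.single 1 1 - Finsupp.single 3 1)
            (4 * ((s + j : ℕ) : ℂ) * ((t + j : ℕ) : ℂ)) := by
    intro j _
    rw [Lap_smul, Lap_monomial, hE0, hE1, hE2, hE3, smul_add]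
    norm_num
  rw [Finset.sum_congr rfl step, Finset.sum_add_distrib]
  rw [Finset.sum_range_succ, Finset.sum_range_succ']
  have hlast : lam c A s t (min c A) •
      monomial (Ee c A s t (min c A) - Finsupp.single 0 1 - Finsupp.single 2 1)
        (4 * ((A - min c A : ℕ) : ℂ) * ((c - min c A : ℕ) : ℂ)) = 0 := by
    have h0 : (4:ℂ) * ((A - min c A : ℕ) : ℂ) * ((c - min c A : ℕ) : ℂ) = 0 := by
      rcases (by omega : A - min c A = 0 ∨ c - min c A = 0) with h | h <;> rw [h] <;> simp
    rw [h0, map_zero, smul_zero]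
  have hfirst : lam c A s t 0 •
      monomial (Ee c A s t 0 - Finsupp.single 1 1 - Finsupp.single 3 1)
        (4 * ((s + 0 : ℕ) : ℂ) * ((t + 0 : ℕ) : ℂ)) = 0 := by
    have h0 : (4:ℂ) * ((s + 0 : ℕ) : ℂ) * ((t + 0 : ℕ) : ℂ) = 0 := by
      have := congrArg (Nat.cast : ℕ → ℂ) hst
      push_cast at this
      push_cast
      linear_combination 4 * this
    rw [h0, map_zero, smul_zero]
  rw [hlast, hfirst, add_zero, add_zero, ← Finset.sum_add_distrib]
  apply Finset.sum_eq_zero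
  intro j hj
  have hjm : j < min c A := Finset.mem_range.mp hj
  rw [hsub1, hsub2, smul_monomial, smul_monomial, smul_eq_mul, smul_eq_mul,
    ← map_add]
  rw [show (monomial (Ff c A s t j)) (lam c A s t j * (4 * ((A - j : ℕ) : ℂ) * ((c - j : ℕ) : ℂ))
      + lam c A s t (j+1) * (4 * ((s + (j+1) : ℕ) : ℂ) * ((t + (j+1) : ℕ) : ℂ))) = 0 ↔ True from
    by rw [iff_true, monomial_eq_zero]
       push_cast [Nat.cast_sub (by omega : j ≤ A), Nat.cast_sub (by omega : j ≤ c)]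
       linear_combination 4 * key c A s t j hst]
  trivial

/-- The polynomial
`p_k^{(a,b)} = Σ_{j=0}^{m} (−1)^j/j! · (−c)_j (a+b−c−k)_j / (|b−a|+1)_j ·
z^{k−(a+b−c)−j} w^{a−c+j} z̄^{c−j} w̄^{b−c+j}` is harmonic, where
`m = min{a,b,k−a,k−b}` and `c = min{a,b}`. -/
theorem pab_harmonic (k a b : ℕ) (ha : a ≤ k) (hb : b ≤ k) :
    Lap (∑ j ∈ Finset.range (min (min a b) (min (k - a) (k - b)) + 1),
        (((-1 : ℂ) ^ j * ((risingFac (-(min a b : ℤ)) j : ℤ) : ℂ) *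
            ((risingFac ((a : ℤ) + b - min a b - k) j : ℤ) : ℂ)) /
          ((j.factorial : ℂ) * ((risingFac (|(b : ℤ) - a| + 1) j : ℤ) : ℂ))) •
        ((X 0 : MvPolynomial (Fin 4) ℂ) ^ (k - (a + b - min a b) - j) *
          X 1 ^ (a - min a b + j) * X 2 ^ (min a b - j) *
          X 3 ^ (b - min a b + j))) = 0 := by
  set c := min a b with hc
  set A := min (k - a) (k - b) with hA
  set s := a - min a b with hs
  set t := b - min a b with ht
  have hst : s * t = 0 := by
    rcases Nat.le_total a b with h | h
    · have : s = 0 := by omega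
      simp [this]
    · have : t = 0 := by omega
      simp [this]
  have habs : |(b : ℤ) - a| = (s : ℤ) + t := by
    rcases Nat.le_total a b with h | h
    · rw [abs_of_nonneg (by omega)]; omega
    · rw [abs_of_nonpos (by omega)]; omega
  have harg : (a : ℤ) + b - min a b - k = -(A : ℤ) := by
    push_cast; omega
  have hmin : -(min (a:ℤ) (b:ℤ)) = -(c : ℤ) := by push_cast; omega
  have heq : ∀ j ∈ Finset.range (min c A + 1),
      (((-1 : ℂ) ^ j * ((risingFac (-(min a b : ℤ)) j : ℤ) : ℂ) *
            ((risingFac ((a : ℤ) + b - min a b - k) j : ℤ) : ℂ)) /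
          ((j.factorial : ℂ) * ((risingFac (|(b : ℤ) - a| + 1) j : ℤ) : ℂ))) •
        ((X 0 : MvPolynomial (Fin 4) ℂ) ^ (k - (a + b - min a b) - j) *
          X 1 ^ (a - min a b + j) * X 2 ^ (min a b - j) *
          X 3 ^ (b - min a b + j)) =
      lam c A s t j • (monomial (Ee c A s t j) (1:ℂ)) := by
    intro j _
    have hexp : k - (a + b - min a b) - j = A - j := by omega
    have h1 : a - min a b + j = s + j := by omega
    have h2 : min a b - j = c - j := by omega
    have h3 : b - min a b + j = t + j := by omega
    rw [harg, hmin, habs, hexp, h1, h2, h3]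
    rw [X_pow_eq_monomial, X_pow_eq_monomial, X_pow_eq_monomial, X_pow_eq_monomial,
      monomial_mul, monomial_mul, monomial_mul, lam, Ee]
    simp only [one_mul, mul_one, add_assoc]
  rw [Finset.sum_congr rfl heq]
  exact aux c A s t hst
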